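/- arXiv:2407.11791 — 7 statements merged into one kernel-verified Lean document; each statement's English description precedes it below -/
import Mathlib

section
/- Let k be a field and G a totally ordered abelian group. Then there exist a field Q and a surjective valuation ν : Q → G ∪ {∞} such that the residue field R_ν/m_ν of its valuation ring is isomorphic to k. In particular, for every field k and totally ordered abelian group G there is a valuation domain with value group order-isomorphic to G and residue field isomorphic to k. -/
universe u v

section Aux
variable {k : Type u} [Field k] {G : Type v} [AddCommGroup G] [LinearOrder G] [IsOrderedAddMonoid G]

lemma aux_mul_coeff_zero {x y : HahnSeries G k} (hx : 0 ≤ x.orderTop) (hy : 0 ≤ y.orderTop) :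
    (x * y).coeff 0 = x.coeff 0 * y.coeff 0 := by
  rw [HahnSeries.coeff_mul]
  have hsub : Finset.antidiagonal x.isPWO_support y.isPWO_support 0 ⊆ {((0:G), (0:G))} := by
    intro ij hij
    rw [Finset.mem_antidiagonal] at hij
    obtain ⟨h1, h2, h3⟩ := hij
    have hi : (0 : G) ≤ ij.1 := by
      have := HahnSeries.orderTop_le_of_coeff_ne_zero h1
      exact_mod_cast le_trans hx this
    have hj : (0 : G) ≤ ij.2 := by
      have := HahnSeries.orderTop_le_of_coeff_ne_zero h2
      exact_mod_cast le_trans hy this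
    have hi0 : ij.1 = 0 := le_antisymm (h3 ▸ le_add_of_nonneg_right hj) hi
    have hj0 : ij.2 = 0 := le_antisymm (h3 ▸ le_add_of_nonneg_left hi) hj
    simp [Finset.mem_singleton, Prod.ext_iff, hi0, hj0]
  rcases Finset.subset_singleton_iff.mp hsub with he | he
  · rw [he, Finset.sum_empty]
    by_contra hc
    have hx0 : x.coeff 0 ≠ 0 := fun h => hc (by rw [h, zero_mul])
    have hy0 : y.coeff 0 ≠ 0 := fun h => hc (by rw [h, mul_zero])
    have : ((0:G), (0:G)) ∈ Finset.antidiagonal x.isPWO_support y.isPWO_support 0 := by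
      rw [Finset.mem_antidiagonal]
      exact ⟨hx0, hy0, add_zero 0⟩
    rw [he] at this
    exact Finset.notMem_empty _ this
  · rw [he, Finset.sum_singleton]

def valSubring (k : Type u) [Field k] (G : Type v) [AddCommGroup G] [LinearOrder G] [IsOrderedAddMonoid G] :
    Subring (HahnSeries G k) where
  carrier := {x | 0 ≤ x.orderTop}
  mul_mem' {a b} ha hb := by
    have h := (HahnSeries.addVal G k).map_mul a b
    simp only [HahnSeries.addVal_apply] at h
    simp only [Set.mem_setOf_eq, h]
    exact add_nonneg ha hb
  one_mem' := by simp [Set.mem_setOf_eq, HahnSeries.orderTop_one]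
  add_mem' {a b} ha hb :=
    le_trans (le_min ha hb) (HahnSeries.min_orderTop_le_orderTop_add (x := a) (y := b))
  zero_mem' := by simp [HahnSeries.orderTop_zero]
  neg_mem' {a} ha := by simpa [HahnSeries.orderTop_neg] using ha

end Aux

/-- Let `k` be a field and `G` a totally ordered abelian group. Then there
exist a field `Q` and a surjective valuation `ν : Q → G ∪ {∞}` such that the residue field
`R_ν/m_ν` of its valuation ring is isomorphic to `k`. -/
theorem statement_0 (k : Type u) [Field k] (G : Type v) [AddCommGroup G] [LinearOrder G] [IsOrderedAddMonoid G] :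
    ∃ (Q : Type (max u v)) (_ : Field Q) (ν : Q → WithTop G),
      (∀ x : Q, ν x = ⊤ ↔ x = 0) ∧
      (∀ x y : Q, ν (x * y) = ν x + ν y) ∧
      (∀ x y : Q, min (ν x) (ν y) ≤ ν (x + y)) ∧
      (∀ g : G, ∃ x : Q, ν x = (g : WithTop G)) ∧
      ∃ R : Subring Q, (∀ x : Q, x ∈ R ↔ 0 ≤ ν x) ∧
        ∃ m : Ideal R, (∀ r : R, r ∈ m ↔ 0 < ν (r : Q)) ∧
          Nonempty ((↥R ⧸ m) ≃+* k) := by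
  refine ⟨HahnSeries G k, inferInstance, fun x => x.orderTop, ?_, ?_, ?_, ?_, ?_⟩
  · exact fun x => HahnSeries.orderTop_eq_top
  · exact fun x y => (HahnSeries.addVal G k).map_mul x y
  · exact fun x y => HahnSeries.min_orderTop_le_orderTop_add (x := x) (y := y)
  · exact fun g => ⟨HahnSeries.single g 1, HahnSeries.orderTop_single one_ne_zero⟩
  · refine ⟨valSubring k G, fun x => Iff.rfl, ?_⟩
    let φ : ↥(valSubring k G) →+* k :=
      { toFun := fun r => (r : HahnSeries G k).coeff 0
        map_one' := by simp [HahnSeries.coeff_one]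
        map_mul' := fun a b =>
          aux_mul_coeff_zero a.2 b.2
        map_zero' := by simp
        map_add' := fun a b => by simp [HahnSeries.coeff_add] }
    have hker : ∀ r : ↥(valSubring k G), φ r = 0 ↔ 0 < ((r : HahnSeries G k).orderTop) := by
      intro r
      constructor
      · intro h
        have hr2 : (0:WithTop G) ≤ (r : HahnSeries G k).orderTop := r.2
        refine lt_of_le_of_ne hr2 (fun h' => ?_)
        exact HahnSeries.coeff_orderTop_ne (g := (0:G)) (by exact_mod_cast h'.symm) h
      · intro h
        exact HahnSeries.coeff_eq_zero_of_lt_orderTop (by exact_mod_cast h)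
    refine ⟨RingHom.ker φ, fun r => by rw [RingHom.mem_ker]; exact hker r, ?_⟩
    have hsurj : Function.Surjective φ := by
      intro c
      refine ⟨⟨HahnSeries.single 0 c, ?_⟩, HahnSeries.coeff_single_same 0 c⟩
      exact_mod_cast HahnSeries.orderTop_single_le (a := (0:G)) (r := c)
    exact ⟨RingHom.quotientKerEquivOfSurjective hsurj⟩
end

section
/- Let k be a field and G, H totally ordered abelian groups, and let G ×ₗ H be their lexicographic product. Then there is a field isomorphism ψ̄ : Q_k(G ×ₗ H) → Q_{Q_k(H)}(G) induced by Σᵢ cᵢ t^{(gᵢ,hᵢ)} ↦ Σᵢ (cᵢ t^{hᵢ}) t^{gᵢ} (the fraction field of the group algebra of G over the field Q_k(H)). Moreover, there is a surjective valuation ν : Q_{Q_k(H)}(G) → (G ×ₗ H) ∪ {∞} with ν_{G×ₗH} = ν ∘ ψ̄; in particular R_k(G ×ₗ H) is isomorphic as a ring to the valuation ring R_ν = {x : ν(x) ≥ 0}. -/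
set_option synthInstance.maxHeartbeats 1000000
set_option maxHeartbeats 1000000
universe u v w

instance addMonoidAlgebraIsDomain (k : Type*) [Field k] (G : Type*)
    [AddCommGroup G] [LinearOrder G] [IsOrderedAddMonoid G] : IsDomain (AddMonoidAlgebra k G) :=
  NoZeroDivisors.to_isDomain _

namespace S6
open AddMonoidAlgebra

theorem liftNCRingHom_single {k G R : Type*} [Semiring k] [AddMonoid G] [Semiring R]
    (f : k →+* R) (g : Multiplicative G →* R) (h) (a : G) (b : k) :
    AddMonoidAlgebra.liftNCRingHom f g h (AddMonoidAlgebra.single a b)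
      = f b * g (Multiplicative.ofAdd a) :=
  AddMonoidAlgebra.liftNC_single _ _ _ _

variable (k : Type u) [Field k] (G : Type v) (H : Type w)
  [AddCommGroup G] [LinearOrder G] [IsOrderedAddMonoid G]
  [AddCommGroup H] [LinearOrder H] [IsOrderedAddMonoid H]

/-- `h ↦ (0, h)` as an additive hom into the lex product. -/
def inrHom : H →+ (G ×ₗ H) where
  toFun h := toLex (0, h)
  map_zero' := rfl
  map_add' h h' := by rw [← toLex_add, Prod.mk_add_mk, zero_add]

theorem lexAdd (g g' : G) (h h' : H) :
    toLex (g, h) + toLex (g', h') = toLex (g + g', h + h') := by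
  rw [← toLex_add, Prod.mk_add_mk]

/-- `g ↦ (g, 0)` as an additive hom into the lex product. -/
def inlHom : G →+ (G ×ₗ H) where
  toFun g := toLex (g, 0)
  map_zero' := rfl
  map_add' g g' := by rw [← toLex_add, Prod.mk_add_mk, add_zero]

theorem addSelfZero {α : Type*} [AddCommGroup α] [LinearOrder α] [IsOrderedAddMonoid α] {a : α}
    (h : a + a = 0) : a = 0 := by
  rcases lt_trichotomy a 0 with hlt | he | hgt
  · have h2 := add_lt_add hlt hlt
    rw [add_zero] at h2
    exact absurd h (ne_of_lt h2)
  · exact he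
  · have h2 := add_lt_add hgt hgt
    rw [add_zero] at h2
    exact absurd h (ne_of_gt h2)

theorem inrHom_injective : Function.Injective (inrHom G H) := by
  intro a b hab
  exact congrArg (fun x => (ofLex x).2) hab

/-- monoid-hom ingredient of `sigma`. -/
noncomputable def ghom : Multiplicative (G ×ₗ H) →*
    AddMonoidAlgebra (FractionRing (AddMonoidAlgebra k H)) G where
  toFun x := AddMonoidAlgebra.single (ofLex x.toAdd).1
      (algebraMap (AddMonoidAlgebra k H) (FractionRing (AddMonoidAlgebra k H))
        (AddMonoidAlgebra.single (ofLex x.toAdd).2 1))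
  map_one' := by
    show AddMonoidAlgebra.single (0 : G)
      (algebraMap (AddMonoidAlgebra k H) (FractionRing (AddMonoidAlgebra k H))
        (AddMonoidAlgebra.single (0 : H) 1)) = 1
    rw [← AddMonoidAlgebra.one_def, map_one, ← AddMonoidAlgebra.one_def]
  map_mul' x y := by
    show AddMonoidAlgebra.single ((ofLex x.toAdd).1 + (ofLex y.toAdd).1)
        (algebraMap (AddMonoidAlgebra k H) (FractionRing (AddMonoidAlgebra k H))
          (AddMonoidAlgebra.single ((ofLex x.toAdd).2 + (ofLex y.toAdd).2) 1)) = _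
    rw [AddMonoidAlgebra.single_mul_single, ← map_mul, AddMonoidAlgebra.single_mul_single,
      one_mul]

/-- The basic ring hom `k[t^{G ×ₗ H}] →+* (Q_k(H))[t^G]`. -/
noncomputable def sigma : AddMonoidAlgebra k (G ×ₗ H) →+*
    AddMonoidAlgebra (FractionRing (AddMonoidAlgebra k H)) G :=
  AddMonoidAlgebra.liftNCRingHom
    (AddMonoidAlgebra.singleZeroRingHom.comp
      ((algebraMap (AddMonoidAlgebra k H) (FractionRing (AddMonoidAlgebra k H))).comp
        AddMonoidAlgebra.singleZeroRingHom))
    (ghom k G H) (fun _ _ => Commute.all _ _)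

theorem sigma_single (x : G ×ₗ H) (b : k) :
    sigma k G H (AddMonoidAlgebra.single x b)
      = AddMonoidAlgebra.single (ofLex x).1
          (algebraMap (AddMonoidAlgebra k H) (FractionRing (AddMonoidAlgebra k H))
            (AddMonoidAlgebra.single (ofLex x).2 b)) := by
  rw [sigma, liftNCRingHom_single]
  show AddMonoidAlgebra.single (0 : G)
        (algebraMap (AddMonoidAlgebra k H) (FractionRing (AddMonoidAlgebra k H))
          (AddMonoidAlgebra.single (0 : H) b)) *
      AddMonoidAlgebra.single (ofLex x).1
        (algebraMap (AddMonoidAlgebra k H) (FractionRing (AddMonoidAlgebra k H))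
          (AddMonoidAlgebra.single (ofLex x).2 1)) = _
  rw [AddMonoidAlgebra.single_mul_single, zero_add, ← map_mul,
    AddMonoidAlgebra.single_mul_single, zero_add, mul_one]

/-- `k[t^H] →+* k[t^{G ×ₗ H}]`. -/
noncomputable def iotaHom : AddMonoidAlgebra k H →+* AddMonoidAlgebra k (G ×ₗ H) :=
  AddMonoidAlgebra.mapDomainRingHom k (inrHom G H)

theorem iotaHom_single (h : H) (c : k) :
    iotaHom k G H (AddMonoidAlgebra.single h c)
      = AddMonoidAlgebra.single (toLex ((0 : G), h)) c := by
  show AddMonoidAlgebra.mapDomain (inrHom G H) (AddMonoidAlgebra.single h c) = _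
  rw [AddMonoidAlgebra.mapDomain_single]
  rfl

theorem iotaHom_injective : Function.Injective (iotaHom k G H) :=
  AddMonoidAlgebra.mapDomain_injective (inrHom_injective G H)

noncomputable def bHom : AddMonoidAlgebra k H →+*
    FractionRing (AddMonoidAlgebra k (G ×ₗ H)) :=
  (algebraMap (AddMonoidAlgebra k (G ×ₗ H))
    (FractionRing (AddMonoidAlgebra k (G ×ₗ H)))).comp (iotaHom k G H)

theorem bHom_injective : Function.Injective (bHom k G H) :=
  (IsFractionRing.injective (AddMonoidAlgebra k (G ×ₗ H))
    (FractionRing (AddMonoidAlgebra k (G ×ₗ H)))).comp (iotaHom_injective k G H)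

noncomputable def fK : FractionRing (AddMonoidAlgebra k H) →+*
    FractionRing (AddMonoidAlgebra k (G ×ₗ H)) :=
  IsFractionRing.lift (bHom_injective k G H)

noncomputable def gGhom : Multiplicative G →*
    FractionRing (AddMonoidAlgebra k (G ×ₗ H)) :=
  ((algebraMap (AddMonoidAlgebra k (G ×ₗ H))
      (FractionRing (AddMonoidAlgebra k (G ×ₗ H)))) :
        AddMonoidAlgebra k (G ×ₗ H) →+* _).toMonoidHom.comp
    ((AddMonoidAlgebra.of k (G ×ₗ H)).comp
      (AddMonoidHom.toMultiplicative (inlHom G H)))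

theorem gGhom_apply (g : Multiplicative G) :
    gGhom k G H g = algebraMap (AddMonoidAlgebra k (G ×ₗ H))
      (FractionRing (AddMonoidAlgebra k (G ×ₗ H)))
      (AddMonoidAlgebra.single (toLex (g.toAdd, (0 : H))) (1 : k)) := by
  simp only [gGhom, MonoidHom.comp_apply, RingHom.toMonoidHom_eq_coe, MonoidHom.coe_coe]
  congr 1

noncomputable def tau : AddMonoidAlgebra (FractionRing (AddMonoidAlgebra k H)) G →+*
    FractionRing (AddMonoidAlgebra k (G ×ₗ H)) :=
  AddMonoidAlgebra.liftNCRingHom (fK k G H) (gGhom k G H) (fun _ _ => Commute.all _ _)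

theorem tau_single (a : G) (b : FractionRing (AddMonoidAlgebra k H)) :
    tau k G H (AddMonoidAlgebra.single a b)
      = fK k G H b * algebraMap (AddMonoidAlgebra k (G ×ₗ H))
          (FractionRing (AddMonoidAlgebra k (G ×ₗ H)))
          (AddMonoidAlgebra.single (toLex (a, (0 : H))) (1 : k)) := by
  rw [tau, liftNCRingHom_single, gGhom_apply]
  rfl

theorem tau_sigma_single (x : G ×ₗ H) (b : k) :
    tau k G H (sigma k G H (AddMonoidAlgebra.single x b))
      = algebraMap (AddMonoidAlgebra k (G ×ₗ H))
          (FractionRing (AddMonoidAlgebra k (G ×ₗ H)))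
          (AddMonoidAlgebra.single x b) := by
  rw [sigma_single, tau_single, fK, IsFractionRing.lift_algebraMap, bHom, RingHom.comp_apply,
    iotaHom_single, ← map_mul, AddMonoidAlgebra.single_mul_single, mul_one]
  congr 1
  rw [← toLex_add, Prod.mk_add_mk, zero_add, add_zero]
  rfl

theorem tau_sigma : (tau k G H).comp (sigma k G H)
    = algebraMap (AddMonoidAlgebra k (G ×ₗ H))
        (FractionRing (AddMonoidAlgebra k (G ×ₗ H))) := by
  apply AddMonoidAlgebra.ringHom_ext
  · intro b; exact tau_sigma_single k G H 0 b
  · intro a; exact tau_sigma_single k G H a 1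

theorem sigma_injective : Function.Injective (sigma k G H) := by
  intro p q hpq
  apply IsFractionRing.injective (AddMonoidAlgebra k (G ×ₗ H))
    (FractionRing (AddMonoidAlgebra k (G ×ₗ H)))
  rw [← RingHom.congr_fun (tau_sigma k G H) p, ← RingHom.congr_fun (tau_sigma k G H) q]
  simp only [RingHom.comp_apply]
  exact congrArg _ hpq

noncomputable def phi : AddMonoidAlgebra k (G ×ₗ H) →+*
    FractionRing (AddMonoidAlgebra (FractionRing (AddMonoidAlgebra k H)) G) :=
  (algebraMap (AddMonoidAlgebra (FractionRing (AddMonoidAlgebra k H)) G)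
    (FractionRing (AddMonoidAlgebra (FractionRing (AddMonoidAlgebra k H)) G))).comp
    (sigma k G H)

theorem phi_injective : Function.Injective (phi k G H) :=
  (IsFractionRing.injective (AddMonoidAlgebra (FractionRing (AddMonoidAlgebra k H)) G)
    (FractionRing (AddMonoidAlgebra (FractionRing (AddMonoidAlgebra k H)) G))).comp
    (sigma_injective k G H)

noncomputable def Phi : FractionRing (AddMonoidAlgebra k (G ×ₗ H)) →+*
    FractionRing (AddMonoidAlgebra (FractionRing (AddMonoidAlgebra k H)) G) :=
  IsFractionRing.lift (phi_injective k G H)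

theorem Phi_tau : (Phi k G H).comp (tau k G H)
    = algebraMap (AddMonoidAlgebra (FractionRing (AddMonoidAlgebra k H)) G)
        (FractionRing (AddMonoidAlgebra (FractionRing (AddMonoidAlgebra k H)) G)) := by
  apply AddMonoidAlgebra.ringHom_ext
  · -- constants from K = FractionRing (k[t^H])
    intro b
    have key : ((Phi k G H).comp ((tau k G H).comp AddMonoidAlgebra.singleZeroRingHom))
        = (algebraMap (AddMonoidAlgebra (FractionRing (AddMonoidAlgebra k H)) G)
            (FractionRing
              (AddMonoidAlgebra (FractionRing (AddMonoidAlgebra k H)) G))).comp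
          AddMonoidAlgebra.singleZeroRingHom := by
      apply IsLocalization.ringHom_ext (nonZeroDivisors (AddMonoidAlgebra k H))
      apply AddMonoidAlgebra.ringHom_ext
      · intro c
        show Phi k G H (tau k G H (AddMonoidAlgebra.single 0
            (algebraMap _ _ (AddMonoidAlgebra.single (0 : H) c)))) = _
        rw [tau_single, fK, IsFractionRing.lift_algebraMap, bHom, RingHom.comp_apply,
          iotaHom_single, ← map_mul, AddMonoidAlgebra.single_mul_single, mul_one,
          lexAdd, zero_add, add_zero,
          Phi, IsFractionRing.lift_algebraMap, phi, RingHom.comp_apply, sigma_single]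
        rfl
      · intro h
        show Phi k G H (tau k G H (AddMonoidAlgebra.single 0
            (algebraMap _ _ (AddMonoidAlgebra.single h (1 : k))))) = _
        rw [tau_single, fK, IsFractionRing.lift_algebraMap, bHom, RingHom.comp_apply,
          iotaHom_single, ← map_mul, AddMonoidAlgebra.single_mul_single, mul_one,
          lexAdd, zero_add, add_zero,
          Phi, IsFractionRing.lift_algebraMap, phi, RingHom.comp_apply, sigma_single]
        rfl
    exact RingHom.congr_fun key b
  · intro a
    show Phi k G H (tau k G H (AddMonoidAlgebra.single a 1)) = _
    rw [tau_single, map_one, one_mul, Phi, IsFractionRing.lift_algebraMap, phi,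
      RingHom.comp_apply, sigma_single]
    congr 1
    show AddMonoidAlgebra.single a (algebraMap _ _ (AddMonoidAlgebra.single (0:H) (1:k))) = _
    rw [← AddMonoidAlgebra.one_def, map_one]

theorem tau_injective : Function.Injective (tau k G H) := by
  intro p q hpq
  apply IsFractionRing.injective (AddMonoidAlgebra (FractionRing (AddMonoidAlgebra k H)) G)
    (FractionRing (AddMonoidAlgebra (FractionRing (AddMonoidAlgebra k H)) G))
  rw [← RingHom.congr_fun (Phi_tau k G H) p, ← RingHom.congr_fun (Phi_tau k G H) q]
  simp only [RingHom.comp_apply]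
  exact congrArg _ hpq

noncomputable def Psi : FractionRing (AddMonoidAlgebra (FractionRing (AddMonoidAlgebra k H)) G)
    →+* FractionRing (AddMonoidAlgebra k (G ×ₗ H)) :=
  IsFractionRing.lift (tau_injective k G H)

theorem Psi_Phi : (Psi k G H).comp (Phi k G H) = RingHom.id _ := by
  apply IsLocalization.ringHom_ext (nonZeroDivisors (AddMonoidAlgebra k (G ×ₗ H)))
  refine RingHom.ext fun a => ?_
  simp only [RingHom.comp_apply, RingHom.id_apply]
  rw [Phi, IsFractionRing.lift_algebraMap, phi, RingHom.comp_apply, Psi,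
    IsFractionRing.lift_algebraMap]
  simpa using RingHom.congr_fun (tau_sigma k G H) a

theorem Phi_Psi : (Phi k G H).comp (Psi k G H) = RingHom.id _ := by
  apply IsLocalization.ringHom_ext
    (nonZeroDivisors (AddMonoidAlgebra (FractionRing (AddMonoidAlgebra k H)) G))
  refine RingHom.ext fun c => ?_
  simp only [RingHom.comp_apply, RingHom.id_apply]
  rw [Psi, IsFractionRing.lift_algebraMap]
  simpa using RingHom.congr_fun (Phi_tau k G H) c

noncomputable def psiEquiv : FractionRing (AddMonoidAlgebra k (G ×ₗ H)) ≃+*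
    FractionRing (AddMonoidAlgebra (FractionRing (AddMonoidAlgebra k H)) G) :=
  RingEquiv.ofRingHom (Phi k G H) (Psi k G H) (Phi_Psi k G H) (Psi_Phi k G H)

theorem psiEquiv_algebraMap (a : AddMonoidAlgebra k (G ×ₗ H)) :
    psiEquiv k G H (algebraMap _ _ a)
      = algebraMap (AddMonoidAlgebra (FractionRing (AddMonoidAlgebra k H)) G)
          (FractionRing (AddMonoidAlgebra (FractionRing (AddMonoidAlgebra k H)) G))
          (sigma k G H a) := by
  show Phi k G H (algebraMap _ _ a) = _
  rw [Phi, IsFractionRing.lift_algebraMap]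
  rfl

theorem psiEquiv_symm_apply (x) : (psiEquiv k G H).symm x = Psi k G H x := rfl

end S6

/-- Let `k` be a field, `G`, `H` totally ordered abelian groups, and
`G ×ₗ H` their lexicographic product.  Let `ν_{G×ₗH}` be the canonical valuation of
`Q_k(G ×ₗ H)`.  Then there is a field isomorphism
`ψ̄ : Q_k(G ×ₗ H) → Q_{Q_k(H)}(G)` induced by `Σ cᵢ t^{(gᵢ,hᵢ)} ↦ Σ (cᵢ t^{hᵢ}) t^{gᵢ}`;
there is a surjective valuation `ν : Q_{Q_k(H)}(G) → (G ×ₗ H) ∪ {∞}` with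
`ν_{G×ₗH} = ν ∘ ψ̄`; and `R_k(G ×ₗ H)` is isomorphic as a ring to the valuation ring
`R_ν = {x : ν x ≥ 0}`. -/


theorem statement_6 (k : Type u) [Field k] (G : Type v) (H : Type w)
    [AddCommGroup G] [LinearOrder G] [IsOrderedAddMonoid G]
    [AddCommGroup H] [LinearOrder H] [IsOrderedAddMonoid H]
    (νGH : FractionRing (AddMonoidAlgebra k (G ×ₗ H)) → WithTop (G ×ₗ H))
    (hνGH0 : ∀ x, νGH x = ⊤ ↔ x = 0)
    (hνGHmul : ∀ x y, νGH (x * y) = νGH x + νGH y)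
    (hνGHadd : ∀ x y, min (νGH x) (νGH y) ≤ νGH (x + y))
    (hνGHgen : ∀ p : AddMonoidAlgebra k (G ×ₗ H),
      νGH (algebraMap (AddMonoidAlgebra k (G ×ₗ H))
          (FractionRing (AddMonoidAlgebra k (G ×ₗ H))) p) = p.coeff.support.min) :
    ∃ ψ : FractionRing (AddMonoidAlgebra k (G ×ₗ H)) ≃+*
        FractionRing (AddMonoidAlgebra (FractionRing (AddMonoidAlgebra k H)) G),
      (∀ (g : G) (h : H) (c : k),
        ψ (algebraMap (AddMonoidAlgebra k (G ×ₗ H))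
            (FractionRing (AddMonoidAlgebra k (G ×ₗ H)))
            (AddMonoidAlgebra.single (toLex (g, h)) c)) =
          algebraMap (AddMonoidAlgebra (FractionRing (AddMonoidAlgebra k H)) G)
            (FractionRing (AddMonoidAlgebra (FractionRing (AddMonoidAlgebra k H)) G))
            (AddMonoidAlgebra.single g
              (algebraMap (AddMonoidAlgebra k H) (FractionRing (AddMonoidAlgebra k H))
                (AddMonoidAlgebra.single h c)))) ∧
      ∃ ν : FractionRing (AddMonoidAlgebra (FractionRing (AddMonoidAlgebra k H)) G) →
          WithTop (G ×ₗ H),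
        (∀ x, ν x = ⊤ ↔ x = 0) ∧
        (∀ x y, ν (x * y) = ν x + ν y) ∧
        (∀ x y, min (ν x) (ν y) ≤ ν (x + y)) ∧
        (∀ w : G ×ₗ H, ∃ x, ν x = (w : WithTop (G ×ₗ H))) ∧
        (∀ x, νGH x = ν (ψ x)) ∧
        ∃ (RA : Subring (FractionRing (AddMonoidAlgebra k (G ×ₗ H))))
          (RB : Subring
            (FractionRing (AddMonoidAlgebra (FractionRing (AddMonoidAlgebra k H)) G))),
          (∀ x, x ∈ RA ↔ 0 ≤ νGH x) ∧ (∀ x, x ∈ RB ↔ 0 ≤ ν x) ∧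
          Nonempty (RA ≃+* RB) := by
  classical
  set ψ := S6.psiEquiv k G H with hψ
  refine ⟨ψ, ?_, ?_⟩
  · intro g h c
    rw [hψ, S6.psiEquiv_algebraMap, S6.sigma_single]
    rfl
  · refine ⟨fun x => νGH (ψ.symm x), ?_, ?_, ?_, ?_, ?_, ?_⟩
    · intro x
      show νGH (ψ.symm x) = ⊤ ↔ x = 0
      rw [hνGH0]
      exact EmbeddingLike.map_eq_zero_iff
    · intro x y
      show νGH (ψ.symm (x * y)) = νGH (ψ.symm x) + νGH (ψ.symm y)
      rw [map_mul]
      exact hνGHmul _ _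
    · intro x y
      show min (νGH (ψ.symm x)) (νGH (ψ.symm y)) ≤ νGH (ψ.symm (x + y))
      have h := hνGHadd (ψ.symm x) (ψ.symm y)
      rwa [← map_add] at h
    · intro w
      refine ⟨ψ (algebraMap _ _ (AddMonoidAlgebra.single w (1 : k))), ?_⟩
      show νGH (ψ.symm (ψ _)) = _
      rw [RingEquiv.symm_apply_apply, hνGHgen, AddMonoidAlgebra.coeff_single,
        Finsupp.support_single_ne_zero w one_ne_zero, Finset.min_singleton]
    · intro x
      show νGH x = νGH (ψ.symm (ψ x))
      rw [RingEquiv.symm_apply_apply]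
    · have hν1 : νGH 1 = 0 := by
        have h1 : νGH (1 : FractionRing (AddMonoidAlgebra k (G ×ₗ H))) ≠ ⊤ := by
          rw [ne_eq, hνGH0]; exact one_ne_zero
        obtain ⟨a, ha⟩ := WithTop.ne_top_iff_exists.mp h1
        have h2 := hνGHmul 1 1
        rw [mul_one, ← ha, ← WithTop.coe_add, WithTop.coe_eq_coe] at h2
        rw [← ha, show a = 0 from left_eq_add.mp h2]
        rfl
      have hνneg : ∀ x, νGH (-x) = νGH x := by
        have hne : νGH (-1 : FractionRing (AddMonoidAlgebra k (G ×ₗ H))) ≠ ⊤ := by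
          rw [ne_eq, hνGH0]; exact neg_ne_zero.mpr one_ne_zero
        obtain ⟨a, ha⟩ := WithTop.ne_top_iff_exists.mp hne
        have h2 : (0 : WithTop (G ×ₗ H)) = νGH (-1) + νGH (-1) := by
          have h4 := hνGHmul (-1 : FractionRing (AddMonoidAlgebra k (G ×ₗ H))) (-1)
          rw [show ((-1 : FractionRing (AddMonoidAlgebra k (G ×ₗ H))) * -1) = 1 by ring,
            hν1] at h4
          exact h4
        rw [← ha, ← WithTop.coe_add] at h2
        have h3 : a + a = 0 := by exact_mod_cast h2.symm
        have hm1 : νGH (-1 : FractionRing (AddMonoidAlgebra k (G ×ₗ H))) = 0 := by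
          rw [← ha, S6.addSelfZero h3]; rfl
        intro x
        have h5 : -x = -1 * x := by ring
        rw [h5, hνGHmul, hm1, zero_add]
      obtain ⟨RA, hRAmem⟩ : ∃ RA : Subring (FractionRing (AddMonoidAlgebra k (G ×ₗ H))),
          ∀ x, x ∈ RA ↔ 0 ≤ νGH x :=
        ⟨{ carrier := {x | 0 ≤ νGH x}
           zero_mem' := by
             simp only [Set.mem_setOf_eq, (hνGH0 0).mpr rfl]
             exact le_top
           one_mem' := by simp only [Set.mem_setOf_eq, hν1, le_refl]
           add_mem' := fun hx hy => le_trans (le_min hx hy) (hνGHadd _ _)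
           mul_mem' := fun hx hy => by
             simp only [Set.mem_setOf_eq, hνGHmul]
             exact add_nonneg hx hy
           neg_mem' := fun hx => by
             simp only [Set.mem_setOf_eq, hνneg]
             exact hx }, fun x => Iff.rfl⟩
      refine ⟨RA, RA.map (ψ : FractionRing (AddMonoidAlgebra k (G ×ₗ H)) →+* _),
        hRAmem, ?_, ⟨Subring.equivMapOfInjective RA
          (ψ : FractionRing (AddMonoidAlgebra k (G ×ₗ H)) →+* _) (by exact ψ.injective)⟩⟩
      intro x
      rw [Subring.mem_map]
      constructor
      · rintro ⟨y, hy, rfl⟩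
        show (0 : WithTop (G ×ₗ H)) ≤ νGH (ψ.symm (ψ y))
        rw [RingEquiv.symm_apply_apply]
        exact (hRAmem y).mp hy
      · intro hx
        exact ⟨ψ.symm x, (hRAmem _).mpr hx, ψ.apply_symm_apply x⟩
end

section
/- Let R be a valuation domain, and let i₁ ⊆ p₁ and i₂ ⊆ p₂ be pairs of prime ideals of R with i₁ and i₂ idempotent (iₜ·iₜ = iₜ). Then there exists a ring homomorphism R_{p₁}/i₁R_{p₁} → R_{p₂}/i₂R_{p₂} commuting with the canonical maps from R if and only if i₁ ⊆ i₂ and p₂ ⊆ p₁. -/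
universe u

/-- Let `R` be a valuation domain and `i₁ ⊆ p₁`, `i₂ ⊆ p₂` pairs of prime
ideals of `R` with `i₁`, `i₂` idempotent.  Then there exists a ring homomorphism
`R_{p₁}/i₁R_{p₁} → R_{p₂}/i₂R_{p₂}` commuting with the canonical maps from `R` if and only
if `i₁ ⊆ i₂` and `p₂ ⊆ p₁`. -/
theorem statement_8 (R : Type u) [CommRing R] [IsDomain R]
    (hchain : ∀ I J : Ideal R, I ≤ J ∨ J ≤ I)
    (i₁ i₂ p₁ p₂ : Ideal R) [i₁.IsPrime] [i₂.IsPrime] [p₁.IsPrime] [p₂.IsPrime]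
    (h₁ : i₁ ≤ p₁) (h₂ : i₂ ≤ p₂) (hi₁ : i₁ * i₁ = i₁) (hi₂ : i₂ * i₂ = i₂) :
    (∃ φ : (Localization.AtPrime p₁ ⧸
          i₁.map (algebraMap R (Localization.AtPrime p₁))) →+*
        (Localization.AtPrime p₂ ⧸ i₂.map (algebraMap R (Localization.AtPrime p₂))),
      ∀ r : R,
        φ (Ideal.Quotient.mk (i₁.map (algebraMap R (Localization.AtPrime p₁)))
            (algebraMap R (Localization.AtPrime p₁) r)) =
          Ideal.Quotient.mk (i₂.map (algebraMap R (Localization.AtPrime p₂)))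
            (algebraMap R (Localization.AtPrime p₂) r)) ↔
    (i₁ ≤ i₂ ∧ p₂ ≤ p₁) := by
  set L₁ := Localization.AtPrime p₁ with hL₁
  set L₂ := Localization.AtPrime p₂ with hL₂
  constructor
  · rintro ⟨φ, hφ⟩
    constructor
    · -- i₁ ≤ i₂
      intro r hr
      have h0 : Ideal.Quotient.mk (i₁.map (algebraMap R L₁)) (algebraMap R L₁ r) = 0 :=
        Ideal.Quotient.eq_zero_iff_mem.mpr (Ideal.mem_map_of_mem _ hr)
      have h2 : algebraMap R L₂ r ∈ i₂.map (algebraMap R L₂) := by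
        have := hφ r
        rw [h0, map_zero] at this
        exact Ideal.Quotient.eq_zero_iff_mem.mp this.symm
      have hdisj : Disjoint (p₂.primeCompl : Set R) (i₂ : Set R) := by
        rw [Set.disjoint_left]
        exact fun x hx hxi => hx (h₂ hxi)
      have hc :
          Ideal.comap (algebraMap R L₂) (Ideal.map (algebraMap R L₂) i₂) = i₂ :=
        IsLocalization.comap_map_of_isPrime_disjoint p₂.primeCompl L₂
          inferInstance hdisj
      rw [← hc]
      exact h2
    · -- p₂ ≤ p₁
      intro r hr
      by_contra hrp
      have hu1 : IsUnit (algebraMap R L₁ r) :=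
        IsLocalization.map_units L₁ (⟨r, hrp⟩ : p₁.primeCompl)
      have hu2 : IsUnit (Ideal.Quotient.mk (i₂.map (algebraMap R L₂))
          (algebraMap R L₂ r)) := by
        rw [← hφ r]
        exact (hu1.map _).map φ
      obtain ⟨u, hu⟩ := hu2
      obtain ⟨b, hb⟩ := Ideal.Quotient.mk_surjective
        ((↑u⁻¹ : L₂ ⧸ i₂.map (algebraMap R L₂)))
      have hone : Ideal.Quotient.mk (i₂.map (algebraMap R L₂))
          (algebraMap R L₂ r * b) = 1 := by
        rw [map_mul, ← hu, hb, Units.mul_inv]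
      have hmem : algebraMap R L₂ r * b - 1 ∈ i₂.map (algebraMap R L₂) := by
        rw [← Ideal.Quotient.eq_zero_iff_mem, map_sub, hone, map_one, sub_self]
      have hle : i₂.map (algebraMap R L₂) ≤ IsLocalRing.maximalIdeal L₂ := by
        calc i₂.map (algebraMap R L₂) ≤ p₂.map (algebraMap R L₂) := Ideal.map_mono h₂
        _ = IsLocalRing.maximalIdeal L₂ := Localization.AtPrime.map_eq_maximalIdeal
      have hrm : algebraMap R L₂ r ∈ IsLocalRing.maximalIdeal L₂ :=
        (IsLocalization.AtPrime.to_map_mem_maximal_iff L₂ p₂ r).mpr hr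
      have h1m : (1 : L₂) ∈ IsLocalRing.maximalIdeal L₂ := by
        have : algebraMap R L₂ r * b -
            (algebraMap R L₂ r * b - 1) ∈ IsLocalRing.maximalIdeal L₂ :=
          Ideal.sub_mem _ (Ideal.mul_mem_right _ _ hrm) (hle hmem)
        simpa using this
      exact (IsLocalRing.maximalIdeal.isMaximal L₂).ne_top
        (Ideal.eq_top_of_isUnit_mem _ h1m isUnit_one)
  · rintro ⟨hi, hp⟩
    have hg : ∀ s : p₁.primeCompl,
        IsUnit (((Ideal.Quotient.mk (i₂.map (algebraMap R L₂))).comp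
          (algebraMap R L₂)) s) := by
      intro s
      have hs2 : (s : R) ∈ p₂.primeCompl := fun h => s.2 (hp h)
      have : IsUnit (algebraMap R L₂ (s : R)) :=
        IsLocalization.map_units L₂ (⟨(s : R), hs2⟩ : p₂.primeCompl)
      exact this.map (Ideal.Quotient.mk (i₂.map (algebraMap R L₂)))
    set f := IsLocalization.lift (S := L₁) (M := p₁.primeCompl) hg with hf
    have hker : ∀ a ∈ i₁.map (algebraMap R L₁), f a = 0 := by
      have : i₁.map (algebraMap R L₁) ≤ RingHom.ker f := by
        rw [Ideal.map_le_iff_le_comap]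
        intro r hr
        rw [Ideal.mem_comap, RingHom.mem_ker, hf, IsLocalization.lift_eq]
        exact Ideal.Quotient.eq_zero_iff_mem.mpr (Ideal.mem_map_of_mem _ (hi hr))
      exact fun a ha => this ha
    refine ⟨Ideal.Quotient.lift _ f hker, fun r => ?_⟩
    rw [Ideal.Quotient.lift_mk, hf, IsLocalization.lift_eq]
    rfl
end

section
/- Let n ≥ 1, ℓ ≥ 2, and idem : {1,…,n} → {0,1} any map. For 1 ≤ i ≤ n set G_i = ℤ if idem(i) = 0 and G_i = ℤ[1/ℓ] if idem(i) = 1, and let G = G₁ ×ₗ ⋯ ×ₗ Gₙ be the lexicographic product. Then the prime filters in G⁺ are exactly the pairwise distinct sets F₁, …, Fₙ, and F_j is idempotent if and only if idem(j) = 1. -/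
open scoped Pointwise

universe v

/-- `ℤ[1/ℓ]` as an additive subgroup of `ℚ`. -/
def zInvSubgroup (ℓ : ℕ) (hℓ : 2 ≤ ℓ) : AddSubgroup ℚ where
  carrier := {q | ∃ (n : ℤ) (m : ℕ), q = (n : ℚ) / (ℓ : ℚ) ^ m}
  zero_mem' := ⟨0, 0, by simp⟩
  add_mem' := by
    rintro a b ⟨n, m, rfl⟩ ⟨n', m', rfl⟩
    refine ⟨n * (ℓ : ℤ) ^ m' + n' * (ℓ : ℤ) ^ m, m + m', ?_⟩
    have h0 : (ℓ : ℚ) ≠ 0 := by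
      have h1 : (0 : ℕ) < ℓ := by omega
      exact_mod_cast h1.ne'
    rw [div_add_div _ _ (pow_ne_zero m h0) (pow_ne_zero m' h0), pow_add]
    push_cast
    ring_nf
  neg_mem' := by
    rintro a ⟨n, m, rfl⟩
    exact ⟨-n, m, by push_cast; ring⟩

/-- `ℤ` as an additive subgroup of `ℚ`. -/
def zIntSubgroup : AddSubgroup ℚ where
  carrier := {q | ∃ n : ℤ, q = (n : ℚ)}
  zero_mem' := ⟨0, by simp⟩
  add_mem' := by
    rintro a b ⟨x, rfl⟩ ⟨y, rfl⟩
    exact ⟨x + y, by push_cast; ring⟩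
  neg_mem' := by
    rintro a ⟨x, rfl⟩
    exact ⟨-x, by push_cast; ring⟩

/-- The group `G_i`: `ℤ` if `idem i = 0` and `ℤ[1/ℓ]` if `idem i = 1`. -/
def mixedSubgroup {n : ℕ} (ℓ : ℕ) (hℓ : 2 ≤ ℓ) (idem : Fin n → Bool) (i : Fin n) :
    AddSubgroup ℚ :=
  if idem i then zInvSubgroup ℓ hℓ else zIntSubgroup

noncomputable instance finPiLex (n : ℕ) (β : Fin n → Type v)
    [∀ i, AddCommGroup (β i)] [∀ i, LinearOrder (β i)] [∀ i, IsOrderedAddMonoid (β i)] :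
    IsOrderedAddMonoid (Lex (∀ i, β i)) :=
  letI : WellFoundedLT (Fin n) := inferInstance
  inferInstance

/-- The subset `F_j = {v ∈ G⁺ : v ≠ 0, supp v ≤ j}` of the lexicographic product. -/
def suppFilter {n : ℕ} (β : Fin n → Type v) [∀ i, AddCommGroup (β i)]
    [∀ i, LinearOrder (β i)] [∀ i, IsOrderedAddMonoid (β i)]
    (j : Fin n) : Set (Lex (∀ i, β i)) :=
  {v | 0 ≤ v ∧ ∃ i ≤ j, ofLex v i ≠ 0}

namespace Aux
variable {n : ℕ} {β : Fin n → Type v} [∀ i, AddCommGroup (β i)] [∀ i, LinearOrder (β i)]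
  [∀ i, IsOrderedAddMonoid (β i)]

lemma lex_lt_iff {v w : Lex (∀ i, β i)} :
    v < w ↔ ∃ i, (∀ k, k < i → ofLex v k = ofLex w k) ∧ ofLex v i < ofLex w i := Iff.rfl

lemma pos_of {v : Lex (∀ i, β i)} (i : Fin n) (h : ∀ k, k < i → ofLex v k = 0)
    (hi : 0 < ofLex v i) : 0 < v :=
  lex_lt_iff.mpr ⟨i, fun k hk => (h k hk).symm, hi⟩

lemma neg_of {v : Lex (∀ i, β i)} (i : Fin n) (h : ∀ k, k < i → ofLex v k = 0)
    (hi : ofLex v i < 0) : v < 0 :=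
  lex_lt_iff.mpr ⟨i, fun k hk => h k hk, hi⟩

/-- first nonzero coordinate of a nonneg element is positive -/
lemma lead_pos {v : Lex (∀ i, β i)} (hv : 0 ≤ v) (i : Fin n)
    (h : ∀ k, k < i → ofLex v k = 0) (hi : ofLex v i ≠ 0) : 0 < ofLex v i := by
  rcases lt_or_gt_of_ne hi with hlt | hgt
  · exact absurd hv (not_le_of_gt (neg_of i h hlt))
  · exact hgt

lemma exists_min_nonzero (v : Lex (∀ i, β i)) {i : Fin n} (h : ofLex v i ≠ 0) :
    ∃ i₀ ≤ i, (∀ k, k < i₀ → ofLex v k = 0) ∧ ofLex v i₀ ≠ 0 := by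
  classical
  set S : Finset (Fin n) := Finset.univ.filter (fun k => ofLex v k ≠ 0) with hS
  have hiS : i ∈ S := Finset.mem_filter.mpr ⟨Finset.mem_univ _, h⟩
  have hne : S.Nonempty := ⟨i, hiS⟩
  refine ⟨S.min' hne, S.min'_le i hiS, fun k hk => ?_, ?_⟩
  · by_contra hk0
    exact absurd (S.min'_le k (Finset.mem_filter.mpr ⟨Finset.mem_univ _, hk0⟩)) (not_le.mpr hk)
  · have := S.min'_mem hne
    exact (Finset.mem_filter.mp this).2

/-- shape of elements of `suppFilter` -/
lemma shape {j : Fin n} {v : Lex (∀ i, β i)} (hv : v ∈ suppFilter β j) :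
    ∃ i ≤ j, (∀ k, k < i → ofLex v k = 0) ∧ 0 < ofLex v i := by
  obtain ⟨h0, i, hij, hne⟩ := hv
  obtain ⟨i₀, hi₀, hz, hne₀⟩ := exists_min_nonzero v hne
  exact ⟨i₀, le_trans hi₀ hij, hz, lead_pos h0 i₀ hz hne₀⟩

lemma mem_of {j : Fin n} {v : Lex (∀ i, β i)} (i : Fin n) (hij : i ≤ j)
    (hz : ∀ k, k < i → ofLex v k = 0) (hp : 0 < ofLex v i) : v ∈ suppFilter β j :=
  ⟨le_of_lt (pos_of i hz hp), i, hij, ne_of_gt hp⟩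

lemma not_mem_iff {j : Fin n} {v : Lex (∀ i, β i)} (hv : 0 ≤ v) :
    v ∉ suppFilter β j ↔ ∀ i ≤ j, ofLex v i = 0 := by
  unfold suppFilter
  simp only [Set.mem_setOf_eq, not_and, not_exists]
  constructor
  · intro h i hij
    by_contra hne
    exact (h hv) i hij hne
  · intro h _ i hij hne
    exact hne (h i hij)

lemma upward {j : Fin n} {v : Lex (∀ i, β i)} (hv : v ∈ suppFilter β j)
    {w : Lex (∀ i, β i)} (hvw : v ≤ w) : w ∈ suppFilter β j := by
  obtain ⟨i, hij, hz, hp⟩ := shape hv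
  by_contra hw
  have h0w : 0 ≤ w := le_trans hv.1 hvw
  have hwz : ∀ k ≤ j, ofLex w k = 0 := (not_mem_iff h0w).mp hw
  have : w < v := lex_lt_iff.mpr ⟨i, fun k hk => by
      rw [hwz k (le_of_lt (lt_of_lt_of_le hk hij)), hz k hk],
    by rw [hwz i hij]; exact hp⟩
  exact absurd hvw (not_le_of_gt this)

lemma prime {j : Fin n} {v w : Lex (∀ i, β i)} (hv : 0 ≤ v) (hw : 0 ≤ w)
    (hvF : v ∉ suppFilter β j) (hwF : w ∉ suppFilter β j) :
    v + w ∉ suppFilter β j := by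
  rw [not_mem_iff hv] at hvF
  rw [not_mem_iff hw] at hwF
  rw [not_mem_iff (add_nonneg hv hw)]
  intro i hij
  have : ofLex (v + w) i = ofLex v i + ofLex w i := rfl
  rw [this, hvF i hij, hwF i hij, add_zero]

lemma completeness [∀ i, Archimedean (β i)]
    (F : Set (Lex (∀ i, β i))) (hne : F.Nonempty) (hpos : ∀ v ∈ F, 0 ≤ v)
    (hup : ∀ v ∈ F, ∀ w, v ≤ w → w ∈ F)
    (hproper : F ≠ {v : Lex (∀ i, β i) | 0 ≤ v})
    (hprime : ∀ v w : Lex (∀ i, β i), 0 ≤ v → 0 ≤ w → v ∉ F → w ∉ F → v + w ∉ F) :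
    ∃ j : Fin n, F = suppFilter β j := by
  classical
  -- 0 ∉ F
  have h0F : (0 : Lex (∀ i, β i)) ∉ F := by
    intro h0
    apply hproper
    apply Set.Subset.antisymm
    · intro v hv; exact hpos v hv
    · intro v hv; exact hup 0 h0 v hv
  have hposF : ∀ v ∈ F, 0 < v := fun v hv =>
    lt_of_le_of_ne (hpos v hv) (by rintro rfl; exact h0F hv)
  -- multiples argument
  have hmul : ∀ v ∈ F, ∀ w : Lex (∀ i, β i), 0 ≤ w → (∃ m : ℕ, v ≤ m • w) → w ∈ F := by
    rintro v hv w hw0 ⟨m, hm⟩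
    by_contra hwF
    have key : ∀ m : ℕ, (m • w : Lex (∀ i, β i)) ∉ F := by
      intro m
      induction m with
      | zero => rw [zero_smul]; exact h0F
      | succ k ih =>
        rw [succ_nsmul]
        exact hprime _ _ (nsmul_nonneg hw0 k) hw0 ih hwF
    exact key m (hup v hv _ hm)
  -- the set of supports
  haveI : DecidablePred (fun i : Fin n =>
      ∃ v ∈ F, (∀ k, k < i → ofLex v k = 0) ∧ 0 < ofLex v i) :=
    fun _ => Classical.propDecidable _
  set S : Finset (Fin n) :=
    Finset.univ.filter (fun i => ∃ v ∈ F, (∀ k, k < i → ofLex v k = 0) ∧ 0 < ofLex v i)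
    with hS
  have hmemS : ∀ v ∈ F, ∃ i ∈ S, (∀ k, k < i → ofLex v k = 0) ∧ 0 < ofLex v i := by
    intro v hv
    obtain ⟨i, hzero, hpos'⟩ := lex_lt_iff.mp (hposF v hv)
    have : ∀ k, k < i → ofLex v k = 0 := fun k hk => (hzero k hk).symm
    refine ⟨i, ?_, this, hpos'⟩
    simp only [hS, Finset.mem_filter, Finset.mem_univ, true_and]
    exact ⟨v, hv, this, hpos'⟩
  have hSne : S.Nonempty := by
    obtain ⟨v, hv⟩ := hne
    obtain ⟨i, hi, -⟩ := hmemS v hv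
    exact ⟨i, hi⟩
  set j := S.max' hSne with hj
  refine ⟨j, Set.Subset.antisymm ?_ ?_⟩
  · intro v hv
    obtain ⟨i, hiS, hz, hp⟩ := hmemS v hv
    exact mem_of i (S.le_max' i hiS) hz hp
  · intro w hw
    obtain ⟨i, hij, hz, hp⟩ := shape hw
    have hjS : ∃ v ∈ F, (∀ k, k < j → ofLex v k = 0) ∧ 0 < ofLex v j := by
      have h := (Finset.mem_filter.mp (S.max'_mem hSne)).2
      rw [hj]; exact h
    obtain ⟨u, huF, huz, hup'⟩ := hjS
    rcases lt_or_eq_of_le hij with hlt | heq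
    · -- i < j : u < w
      have huw : u < w := lex_lt_iff.mpr ⟨i, fun k hk => by
          rw [huz k (lt_trans hk hlt), hz k hk],
        by rw [huz i hlt]; exact hp⟩
      exact hup u huF w (le_of_lt huw)
    · -- i = j : archimedean + primality
      rw [← heq] at huz hup'
      obtain ⟨m, hm⟩ := Archimedean.arch (ofLex u i) hp
      have hw0 : (0 : Lex (∀ k, β k)) ≤ w := hw.1
      refine hmul u huF w hw0 ⟨m + 1, le_of_lt (lex_lt_iff.mpr ⟨i, ?_, ?_⟩)⟩
      · intro k hk
        have : ofLex ((m + 1) • w) k = (m + 1) • ofLex w k := rfl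
        rw [huz k hk, this, hz k hk, smul_zero]
      · have h1 : ofLex ((m + 1) • w) i = (m + 1) • ofLex w i := rfl
        rw [h1, succ_nsmul]
        exact lt_of_le_of_lt hm (lt_add_of_pos_right _ hp)

lemma ofLex_sub (v w : Lex (∀ i, β i)) (k : Fin n) :
    ofLex (v - w) k = ofLex v k - ofLex w k := by
  rw [sub_eq_add_neg, sub_eq_add_neg]; rfl

lemma sum_zero_below {a b : Lex (∀ i, β i)} (ha : 0 ≤ a) (hb : 0 ≤ b) (j : Fin n)
    (hsum : ∀ k, k < j → ofLex a k + ofLex b k = 0) :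
    ∀ k, k < j → ofLex a k = 0 ∧ ofLex b k = 0 := by
  classical
  by_contra hcon
  simp only [not_forall] at hcon
  obtain ⟨k, hkj, hk2⟩ := hcon
  set T : Finset (Fin n) := Finset.univ.filter
      (fun m => m < j ∧ ¬(ofLex a m = 0 ∧ ofLex b m = 0)) with hT
  have hkT : k ∈ T := Finset.mem_filter.mpr ⟨Finset.mem_univ _, hkj, hk2⟩
  have hTne : T.Nonempty := ⟨k, hkT⟩
  have hmT := Finset.mem_filter.mp (T.min'_mem hTne)
  have hmj := hmT.2.1
  have hmne := hmT.2.2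
  have hbelow : ∀ p, p < T.min' hTne → ofLex a p = 0 ∧ ofLex b p = 0 := by
    intro p hp
    by_contra hpc
    have hpj : p < j := lt_trans hp hmj
    have hpT : p ∈ T := Finset.mem_filter.mpr ⟨Finset.mem_univ _, hpj, hpc⟩
    exact absurd (T.min'_le p hpT) (not_le.mpr hp)
  have hza : ∀ p, p < T.min' hTne → ofLex a p = 0 := fun p hp => (hbelow p hp).1
  have hzb : ∀ p, p < T.min' hTne → ofLex b p = 0 := fun p hp => (hbelow p hp).2
  have hs := hsum (T.min' hTne) hmj
  by_cases hma : ofLex a (T.min' hTne) = 0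
  · have hmb : ofLex b (T.min' hTne) = 0 := by rwa [hma, zero_add] at hs
    exact hmne ⟨hma, hmb⟩
  · have hpa := lead_pos ha (T.min' hTne) hza hma
    have hmbeq : ofLex b (T.min' hTne) = -ofLex a (T.min' hTne) := by
      rw [add_comm] at hs
      exact eq_neg_of_add_eq_zero_left hs
    have hmbneg : ofLex b (T.min' hTne) < 0 := by rw [hmbeq]; exact neg_neg_iff_pos.mpr hpa
    have hpb := lead_pos hb (T.min' hTne) hzb (ne_of_lt hmbneg)
    exact absurd hpb (not_lt.mpr (le_of_lt hmbneg))

end Aux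

section Concrete
variable {n : ℕ} (ℓ : ℕ) (hℓ : 2 ≤ ℓ) (idem : Fin n → Bool)

lemma one_mem_mixed (i : Fin n) : (1 : ℚ) ∈ mixedSubgroup ℓ hℓ idem i := by
  unfold mixedSubgroup
  split
  · exact ⟨1, 0, by simp⟩
  · exact ⟨1, by simp⟩

lemma div_mem_mixed {j : Fin n} (hj : idem j = true) {x : ℚ}
    (hx : x ∈ mixedSubgroup ℓ hℓ idem j) : x / ℓ ∈ mixedSubgroup ℓ hℓ idem j := by
  unfold mixedSubgroup at hx ⊢
  rw [hj] at hx ⊢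
  simp only [if_true] at hx ⊢
  obtain ⟨z, m, rfl⟩ := hx
  exact ⟨z, m + 1, by rw [div_div, ← pow_succ]⟩

lemma int_of_mixed {j : Fin n} (hj : idem j = false) {x : ℚ}
    (hx : x ∈ mixedSubgroup ℓ hℓ idem j) : ∃ z : ℤ, x = z := by
  unfold mixedSubgroup at hx
  rw [hj] at hx
  simp only [Bool.false_eq_true, if_false] at hx
  exact hx

end Concrete

/-- Let `n ≥ 1`, `ℓ ≥ 2` and `idem : {1,…,n} → {0,1}` any map.  With
`G_i = ℤ` if `idem i = 0` and `G_i = ℤ[1/ℓ]` if `idem i = 1`, let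
`G = G₁ ×ₗ ⋯ ×ₗ Gₙ` be the lexicographic product.  Then the prime filters in `G⁺` are
exactly the pairwise distinct sets `F₁, …, Fₙ`, and `F_j` is idempotent if and only if
`idem j = 1`. -/
theorem statement_11 (n : ℕ) (hn : 1 ≤ n) (ℓ : ℕ) (hℓ : 2 ≤ ℓ) (idem : Fin n → Bool) :
    -- each `F_j` is a prime filter in `G⁺`
    (∀ j : Fin n,
      (suppFilter (fun i => ↥(mixedSubgroup ℓ hℓ idem i)) j).Nonempty ∧
      (∀ v ∈ suppFilter (fun i => ↥(mixedSubgroup ℓ hℓ idem i)) j, 0 ≤ v) ∧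
      (∀ v ∈ suppFilter (fun i => ↥(mixedSubgroup ℓ hℓ idem i)) j, ∀ w, v ≤ w →
        w ∈ suppFilter (fun i => ↥(mixedSubgroup ℓ hℓ idem i)) j) ∧
      suppFilter (fun i => ↥(mixedSubgroup ℓ hℓ idem i)) j ≠
        {v : Lex (∀ i, ↥(mixedSubgroup ℓ hℓ idem i)) | 0 ≤ v} ∧
      (∀ v w : Lex (∀ i, ↥(mixedSubgroup ℓ hℓ idem i)), 0 ≤ v → 0 ≤ w →
        v ∉ suppFilter (fun i => ↥(mixedSubgroup ℓ hℓ idem i)) j →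
        w ∉ suppFilter (fun i => ↥(mixedSubgroup ℓ hℓ idem i)) j →
        v + w ∉ suppFilter (fun i => ↥(mixedSubgroup ℓ hℓ idem i)) j)) ∧
    -- they are pairwise distinct
    (∀ j j' : Fin n,
      suppFilter (fun i => ↥(mixedSubgroup ℓ hℓ idem i)) j =
        suppFilter (fun i => ↥(mixedSubgroup ℓ hℓ idem i)) j' → j = j') ∧
    -- every prime filter is one of the `F_j`
    (∀ F : Set (Lex (∀ i, ↥(mixedSubgroup ℓ hℓ idem i))),
      F.Nonempty → (∀ v ∈ F, 0 ≤ v) → (∀ v ∈ F, ∀ w, v ≤ w → w ∈ F) →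
      F ≠ {v : Lex (∀ i, ↥(mixedSubgroup ℓ hℓ idem i)) | 0 ≤ v} →
      (∀ v w : Lex (∀ i, ↥(mixedSubgroup ℓ hℓ idem i)), 0 ≤ v → 0 ≤ w →
        v ∉ F → w ∉ F → v + w ∉ F) →
      ∃ j : Fin n, F = suppFilter (fun i => ↥(mixedSubgroup ℓ hℓ idem i)) j) ∧
    -- `F_j` is idempotent iff `idem j = 1`
    (∀ j : Fin n,
      (suppFilter (fun i => ↥(mixedSubgroup ℓ hℓ idem i)) j +
          suppFilter (fun i => ↥(mixedSubgroup ℓ hℓ idem i)) j =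
        suppFilter (fun i => ↥(mixedSubgroup ℓ hℓ idem i)) j) ↔ idem j = true) := by
  classical
  have h1m : ∀ i, (1 : ℚ) ∈ mixedSubgroup ℓ hℓ idem i := one_mem_mixed ℓ hℓ idem
  have h0one : ∀ i, (0 : ↥(mixedSubgroup ℓ hℓ idem i)) < ⟨1, h1m i⟩ := by
    intro i
    rw [← Subtype.coe_lt_coe]
    norm_num
  have hsingle : ∀ (j : Fin n) (c : ↥(mixedSubgroup ℓ hℓ idem j)), 0 < c →
      toLex (Pi.single j c) ∈ suppFilter (fun i => ↥(mixedSubgroup ℓ hℓ idem i)) j := by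
    intro j c hc
    refine Aux.mem_of j le_rfl (fun k hk => ?_) ?_
    · rw [ofLex_toLex]
      exact Pi.single_eq_of_ne (ne_of_lt hk) _
    · rw [ofLex_toLex, Pi.single_eq_same]
      exact hc
  refine ⟨?_, ?_, ?_, ?_⟩
  · -- each F_j is a prime filter
    intro j
    refine ⟨⟨toLex (Pi.single j ⟨1, h1m j⟩), hsingle j _ (h0one j)⟩,
      fun v hv => hv.1,
      fun v hv w hw => Aux.upward hv hw,
      ?_,
      fun v w hv hw hvF hwF => Aux.prime hv hw hvF hwF⟩
    intro h
    have h0 : (0 : Lex (∀ i, ↥(mixedSubgroup ℓ hℓ idem i))) ∈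
        suppFilter (fun i => ↥(mixedSubgroup ℓ hℓ idem i)) j := by
      rw [h]
      simp only [Set.mem_setOf_eq]
      exact le_refl 0
    obtain ⟨-, i, -, hne⟩ := h0
    exact hne rfl
  · -- pairwise distinct
    have key : ∀ j j' : Fin n, j < j' →
        suppFilter (fun i => ↥(mixedSubgroup ℓ hℓ idem i)) j ≠
        suppFilter (fun i => ↥(mixedSubgroup ℓ hℓ idem i)) j' := by
      intro j j' hlt h
      have hmem : toLex (Pi.single j' (⟨1, h1m j'⟩ : ↥(mixedSubgroup ℓ hℓ idem j'))) ∈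
          suppFilter (fun i => ↥(mixedSubgroup ℓ hℓ idem i)) j := by
        rw [h]
        exact hsingle j' _ (h0one j')
      obtain ⟨-, i, hij, hne⟩ := hmem
      refine hne ?_
      rw [ofLex_toLex]
      exact Pi.single_eq_of_ne (ne_of_lt (lt_of_le_of_lt hij hlt)) _
    intro j j' h
    rcases lt_trichotomy j j' with h1 | h2 | h3
    · exact absurd h (key j j' h1)
    · exact h2
    · exact absurd h.symm (key j' j h3)
  · -- completeness
    intro F hne hpos hup hproper hprime
    exact Aux.completeness F hne hpos hup hproper hprime
  · -- idempotence
    intro j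
    constructor
    · -- idempotent → idem j = true
      intro h
      by_contra hjt
      have hj : idem j = false := by simpa using hjt
      have hE : toLex (Pi.single j (⟨1, h1m j⟩ : ↥(mixedSubgroup ℓ hℓ idem j))) ∈
          suppFilter (fun i => ↥(mixedSubgroup ℓ hℓ idem i)) j +
          suppFilter (fun i => ↥(mixedSubgroup ℓ hℓ idem i)) j := by
        rw [h]
        exact hsingle j _ (h0one j)
      rw [Set.mem_add] at hE
      obtain ⟨a, ha, b, hb, hab⟩ := hE
      have hco : ∀ k, ofLex a k + ofLex b k =
          ofLex ((toLex (Pi.single j (⟨1, h1m j⟩ : ↥(mixedSubgroup ℓ hℓ idem j)))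
            : Lex (∀ i, ↥(mixedSubgroup ℓ hℓ idem i)))) k := by
        intro k
        rw [← hab]
        rfl
      have hadd0 : ∀ k, k < j → ofLex a k + ofLex b k = 0 := by
        intro k hk
        rw [hco k, ofLex_toLex]
        exact Pi.single_eq_of_ne (ne_of_lt hk) _
      have hzero := Aux.sum_zero_below ha.1 hb.1 j hadd0
      obtain ⟨ia, hiaj, hza, hpa⟩ := Aux.shape ha
      have hpaj : 0 < ofLex a j := by
        rcases lt_or_eq_of_le hiaj with hlt | heq
        · exact absurd (hzero ia hlt).1 (ne_of_gt hpa)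
        · rwa [heq] at hpa
      obtain ⟨ib, hibj, hzb, hpb⟩ := Aux.shape hb
      have hpbj : 0 < ofLex b j := by
        rcases lt_or_eq_of_le hibj with hlt | heq
        · exact absurd (hzero ib hlt).2 (ne_of_gt hpb)
        · rwa [heq] at hpb
      obtain ⟨za, hza'⟩ := int_of_mixed ℓ hℓ idem hj (ofLex a j).2
      obtain ⟨zb, hzb'⟩ := int_of_mixed ℓ hℓ idem hj (ofLex b j).2
      have hsum1 : (ofLex a j : ℚ) + (ofLex b j : ℚ) = 1 := by
        have h2 := congrArg
          (fun x : ↥(mixedSubgroup ℓ hℓ idem j) => (x : ℚ)) (hco j)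
        simpa [Pi.single_eq_same] using h2
      have hqa : (0 : ℚ) < (ofLex a j : ℚ) := by exact_mod_cast hpaj
      have hqb : (0 : ℚ) < (ofLex b j : ℚ) := by exact_mod_cast hpbj
      rw [hza'] at hqa hsum1
      rw [hzb'] at hqb hsum1
      have hza1 : 1 ≤ za := by exact_mod_cast hqa
      have hzb1 : 1 ≤ zb := by exact_mod_cast hqb
      have : za + zb = 1 := by exact_mod_cast hsum1
      omega
    · -- idem j = true → idempotent
      intro hj
      apply Set.Subset.antisymm
      · intro x hx
        rw [Set.mem_add] at hx
        obtain ⟨a, ha, b, hb, rfl⟩ := hx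
        exact Aux.upward ha (le_add_of_nonneg_right hb.1)
      · intro v hv
        obtain ⟨i, hij, hz, hp⟩ := Aux.shape hv
        rcases lt_or_eq_of_le hij with hlt | heq
        · -- i < j : subtract a unit vector at j
          refine Set.mem_add.mpr
            ⟨v - toLex (Pi.single j (⟨1, h1m j⟩ : ↥(mixedSubgroup ℓ hℓ idem j))), ?_,
             toLex (Pi.single j (⟨1, h1m j⟩ : ↥(mixedSubgroup ℓ hℓ idem j))),
             hsingle j _ (h0one j), sub_add_cancel v _⟩
          refine Aux.mem_of i hij (fun k hk => ?_) ?_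
          · rw [Aux.ofLex_sub, hz k hk, ofLex_toLex,
              Pi.single_eq_of_ne (ne_of_lt (lt_trans hk hlt)) _, sub_zero]
          · rw [Aux.ofLex_sub, ofLex_toLex, Pi.single_eq_of_ne (ne_of_lt hlt) _, sub_zero]
            exact hp
        · -- i = j : divide the leading coefficient by ℓ
          rw [heq] at hz hp
          have hvq : (0 : ℚ) < (ofLex v j : ℚ) := by exact_mod_cast hp
          have hlq : (1 : ℚ) < (ℓ : ℚ) := by exact_mod_cast (by omega : 1 < ℓ)
          have hq : ((ofLex v j : ℚ) / ℓ) ∈ mixedSubgroup ℓ hℓ idem j :=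
            div_mem_mixed ℓ hℓ idem hj (ofLex v j).2
          have hex : ∃ q : ↥(mixedSubgroup ℓ hℓ idem j), 0 < q ∧ q < ofLex v j := by
            refine ⟨⟨(ofLex v j : ℚ) / ℓ, hq⟩, ?_, ?_⟩
            · rw [← Subtype.coe_lt_coe]
              show (0 : ℚ) < (ofLex v j : ℚ) / ℓ
              exact div_pos hvq (lt_trans one_pos hlq)
            · rw [← Subtype.coe_lt_coe]
              show (ofLex v j : ℚ) / ℓ < (ofLex v j : ℚ)
              exact div_lt_self hvq hlq
          obtain ⟨q, h0q, hqv⟩ := hex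
          refine Set.mem_add.mpr
            ⟨v - toLex (Pi.single j q), ?_, toLex (Pi.single j q),
             hsingle j q h0q, sub_add_cancel v _⟩
          refine Aux.mem_of j le_rfl (fun k hk => ?_) ?_
          · rw [Aux.ofLex_sub, hz k hk, ofLex_toLex,
              Pi.single_eq_of_ne (ne_of_lt hk) _, sub_zero]
          · rw [Aux.ofLex_sub, ofLex_toLex, Pi.single_eq_same]
            exact sub_pos.mpr hqv
end

section
/- Let G₁, …, Gₙ be totally ordered abelian groups with G_j = ℤ for some 1 ≤ j ≤ n, and let G = G₁ ×ₗ ⋯ ×ₗ Gₙ be their lexicographic product. Then the element e_j ∈ G (with entry 1 in position j and 0 elsewhere) lies in F_j, but e_j cannot be written as v + w with v, w ∈ F_j; in particular F_j is a filter in G⁺ that is not idempotent. -/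
open scoped Pointwise

universe v

private lemma lex_lt_iff' {n : ℕ} {β : Fin n → Type v} [∀ i, AddCommGroup (β i)] [∀ i, LinearOrder (β i)]
    [∀ i, IsOrderedAddMonoid (β i)]
    (v w : Lex (∀ i, β i)) :
    v < w ↔ ∃ i, (∀ k < i, ofLex v k = ofLex w k) ∧ ofLex v i < ofLex w i := Iff.rfl

/-- Any element of `suppFilter β j` has a minimal support index `i ≤ j` with positive entry. -/
private lemma mem_supp_struct {n : ℕ} {β : Fin n → Type v}
    [∀ i, AddCommGroup (β i)] [∀ i, LinearOrder (β i)]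
    [∀ i, IsOrderedAddMonoid (β i)] {j : Fin n} {v : Lex (∀ i, β i)}
    (hv : v ∈ suppFilter β j) :
    ∃ i ≤ j, (∀ k < i, ofLex v k = 0) ∧ 0 < ofLex v i := by
  obtain ⟨hv0, i₀, hi₀j, hi₀⟩ := hv
  have hvne : v ≠ 0 := by
    intro h
    exact hi₀ (by rw [h]; rfl)
  have hlt : (0 : Lex (∀ i, β i)) < v := lt_of_le_of_ne hv0 (Ne.symm hvne)
  obtain ⟨i, hk, hi⟩ := (lex_lt_iff' 0 v).1 hlt
  refine ⟨i, ?_, fun k hki => (hk k hki).symm, hi⟩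
  by_contra h
  push_neg at h
  exact hi₀ ((hk i₀ (lt_of_le_of_lt hi₀j h)).symm)

/-- Let `G₁, …, Gₙ` be totally ordered abelian groups with `G_j = ℤ` for
some `j`, and `G = G₁ ×ₗ ⋯ ×ₗ Gₙ` their lexicographic product.  Then the element `e_j`
(with entry `1` at position `j` and `0` elsewhere) lies in `F_j`, but `e_j` is not a sum of
two elements of `F_j`; in particular `F_j` is a filter in `G⁺` that is not idempotent. -/
theorem statement_13 (n : ℕ) (hn : 1 ≤ n) (β : Fin n → Type v)
    [∀ i, AddCommGroup (β i)] [∀ i, LinearOrder (β i)]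
    [∀ i, IsOrderedAddMonoid (β i)] (j : Fin n)
    (e : β j ≃+ ℤ) (he : ∀ x y : β j, x ≤ y ↔ e x ≤ e y) :
    toLex (Pi.single j (e.symm 1)) ∈ suppFilter β j ∧
    (¬ ∃ v ∈ suppFilter β j, ∃ w ∈ suppFilter β j,
      toLex (Pi.single j (e.symm 1)) = v + w) ∧
    (suppFilter β j).Nonempty ∧
    (∀ v ∈ suppFilter β j, 0 ≤ v) ∧
    (∀ v ∈ suppFilter β j, ∀ w, v ≤ w → w ∈ suppFilter β j) ∧
    suppFilter β j + suppFilter β j ≠ suppFilter β j := by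
  -- positivity of the generator entry
  have hpos : (0 : β j) < e.symm 1 := by
    by_contra h
    push_neg at h
    have := (he (e.symm 1) 0).1 h
    simp at this
  -- membership of e_j in F_j
  have hmem : toLex (Pi.single j (e.symm 1)) ∈ suppFilter β j := by
    constructor
    · refine le_of_lt ((lex_lt_iff' 0 _).2 ⟨j, fun k hk => ?_, ?_⟩)
      · exact ((Pi.single_eq_of_ne (ne_of_lt hk) (e.symm 1)) : (Pi.single j (e.symm 1) : ∀ i, β i) k = 0).symm
      · show (0 : β j) < (Pi.single j (e.symm 1) : ∀ i, β i) j
        simpa using hpos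
    · exact ⟨j, le_rfl, by simpa using ne_of_gt hpos⟩
  -- key: e_j is not a sum of two elements of F_j
  have hnosum : ¬ ∃ v ∈ suppFilter β j, ∃ w ∈ suppFilter β j,
      toLex (Pi.single j (e.symm 1)) = v + w := by
    rintro ⟨v, hv, w, hw, hsum⟩
    obtain ⟨iv, hivj, hvk, hvpos⟩ := mem_supp_struct hv
    obtain ⟨iw, hiwj, hwk, hwpos⟩ := mem_supp_struct hw
    have hentry : ∀ i : Fin n, (Pi.single j (e.symm 1) : ∀ i, β i) i
        = ofLex v i + ofLex w i := fun i => congrFun (congrArg ofLex hsum) i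
    -- the minimal support of each summand must be exactly j
    have hminv : iv = j ∧ iw = j := by
      rcases le_total iv iw with hle | hle
      · have hivj' : iv = j := by
          by_contra hne
          have hivlt : iv < j := lt_of_le_of_ne hivj hne
          have h0 : ofLex v iv + ofLex w iv = 0 := by
            rw [← hentry iv, Pi.single_eq_of_ne (ne_of_lt hivlt)]
          have hw0 : 0 ≤ ofLex w iv := by
            rcases lt_or_eq_of_le hle with h | h
            · exact le_of_eq (hwk iv h).symm
            · exact le_of_lt (h ▸ hwpos)
          have : 0 < ofLex v iv + ofLex w iv := add_pos_of_pos_of_nonneg hvpos hw0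
          rw [h0] at this; exact lt_irrefl _ this
        exact ⟨hivj', le_antisymm hiwj (hivj' ▸ hle)⟩
      · have hiwj' : iw = j := by
          by_contra hne
          have hiwlt : iw < j := lt_of_le_of_ne hiwj hne
          have h0 : ofLex v iw + ofLex w iw = 0 := by
            rw [← hentry iw, Pi.single_eq_of_ne (ne_of_lt hiwlt)]
          have hv0 : 0 ≤ ofLex v iw := by
            rcases lt_or_eq_of_le hle with h | h
            · exact le_of_eq (hvk iw h).symm
            · exact le_of_lt (h ▸ hvpos)
          have : 0 < ofLex v iw + ofLex w iw := add_pos_of_nonneg_of_pos hv0 hwpos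
          rw [h0] at this; exact lt_irrefl _ this
        exact ⟨le_antisymm hivj (hiwj' ▸ hle), hiwj'⟩
    obtain ⟨hivj', hiwj'⟩ := hminv
    subst hivj'
    -- now both entries at coordinate iv are positive integers summing to 1
    have hj : e.symm 1 = ofLex v iv + ofLex w iv := by
      have := hentry iv
      rwa [Pi.single_eq_same] at this
    have hvZ : 1 ≤ e (ofLex v iv) := by
      have : ¬ (ofLex v iv ≤ 0) := not_le_of_gt hvpos
      rw [he] at this
      simp only [map_zero] at this
      omega
    have hwZ : 1 ≤ e (ofLex w iv) := by
      have hwpos' : 0 < ofLex w iv := hiwj' ▸ hwpos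
      have : ¬ (ofLex w iv ≤ 0) := not_le_of_gt hwpos'
      rw [he] at this
      simp only [map_zero] at this
      omega
    have : (1 : ℤ) = e (ofLex v iv) + e (ofLex w iv) := by
      have := congrArg e hj
      simpa using this
    omega
  refine ⟨hmem, hnosum, ⟨_, hmem⟩, fun v hv => hv.1, ?_, ?_⟩
  · -- upward closed
    rintro x hx y hxy
    obtain ⟨i, hij, hk, hipos⟩ := mem_supp_struct hx
    refine ⟨le_trans hx.1 hxy, ?_⟩
    by_contra h
    push_neg at h
    have hyx : y < x := (lex_lt_iff' y x).2
      ⟨i, fun k hki => by rw [h k (le_of_lt (lt_of_lt_of_le hki hij)), hk k hki],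
        by rw [h i hij]; exact hipos⟩
    exact absurd hxy (not_le_of_gt hyx)
  · -- not idempotent
    intro hFF
    apply hnosum
    have : toLex (Pi.single j (e.symm 1)) ∈ suppFilter β j + suppFilter β j := by
      rw [hFF]; exact hmem
    obtain ⟨a, ha, b, hb, hab⟩ := Set.mem_add.1 this
    exact ⟨a, ha, b, hb, hab.symm⟩
end

section
/- Let n ≥ 1. Then Σ_{k=0}^{n+1} N_k = fib(2n+3), where N_k denotes the number of 2k-tuples (i₁, j₁, …, i_k, j_k) of natural numbers with i₁ ≤ j₁ < i₂ ≤ j₂ < ⋯ < i_k ≤ j_k ≤ n (so N₀ = 1, counting the empty tuple), and fib is the Fibonacci sequence with fib(0) = 0, fib(1) = 1, fib(m+2) = fib(m+1) + fib(m). -/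
open Finset

-- card of strict mono maps Fin m → Fin N
lemma card_strictMonoMaps (m N : ℕ) :
    Nat.card {g : Fin m → Fin N // StrictMono g} = Nat.choose N m := by
  have e : {g : Fin m → Fin N // StrictMono g} ≃ {s : Finset (Fin N) // s.card = m} :=
    { toFun := fun g => ⟨Finset.image g.1 Finset.univ, by
        rw [Finset.card_image_of_injective _ g.2.injective, Finset.card_univ, Fintype.card_fin]⟩
      invFun := fun s => ⟨s.1.orderEmbOfFin s.2, (s.1.orderEmbOfFin s.2).strictMono⟩
      left_inv := fun g => Subtype.ext <|
        (Finset.orderEmbOfFin_unique _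
          (fun x => Finset.mem_image_of_mem _ (Finset.mem_univ x)) g.2).symm
      right_inv := fun s => Subtype.ext <| by
        apply Finset.coe_inj.mp
        rw [Finset.coe_image, Finset.coe_univ, Set.image_univ,
          Finset.range_orderEmbOfFin] }
  rw [Nat.card_congr e, Nat.card_eq_fintype_card, Fintype.card_finset_len, Fintype.card_fin]

section chains

variable {n k : ℕ}

private def e0 {k : ℕ} (t : Fin k) : Fin (2 * k) := ⟨2 * t.1, by omega⟩
private def e1 {k : ℕ} (t : Fin k) : Fin (2 * k) := ⟨2 * t.1 + 1, by omega⟩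

private lemma e0_val (t : Fin k) : (e0 t).1 = 2 * t.1 := rfl
private lemma e1_val (t : Fin k) : (e1 t).1 = 2 * t.1 + 1 := rfl

private def Pchain (n k : ℕ) (f : Fin k → ℕ × ℕ) : Prop :=
  (∀ t, (f t).1 ≤ (f t).2 ∧ (f t).2 ≤ n) ∧
  ∀ (t : Fin k) (h : t.1 + 1 < k), (f t).2 < (f ⟨t.1 + 1, h⟩).1

private def ext0 {k : ℕ} (f : Fin k → ℕ × ℕ) : ℕ → ℕ × ℕ :=
  fun j => if h : j < k then f ⟨j, h⟩ else (0, 0)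

private lemma ext0_eq (f : Fin k → ℕ × ℕ) (t : Fin k) : ext0 f t.1 = f t := by
  unfold ext0
  rw [dif_pos t.2]

/-- all-ℕ version of the chain condition -/
private def Pc (n k : ℕ) (F : ℕ → ℕ × ℕ) : Prop :=
  (∀ t, t < k → (F t).1 ≤ (F t).2 ∧ (F t).2 ≤ n) ∧
  ∀ t, t + 1 < k → (F t).2 < (F (t + 1)).1

private lemma pc_of {f : Fin k → ℕ × ℕ} (hf : Pchain n k f) : Pc n k (ext0 f) := by
  constructor
  · intro t ht
    unfold ext0
    rw [dif_pos ht]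
    exact hf.1 ⟨t, ht⟩
  · intro t ht
    unfold ext0
    rw [dif_pos (show t < k by omega), dif_pos ht]
    exact hf.2 ⟨t, by omega⟩ ht

private def gval {k : ℕ} (f : Fin k → ℕ × ℕ) (s : Fin (2 * k)) : ℕ :=
  if s.1 % 2 = 0 then (ext0 f (s.1 / 2)).1 + s.1 / 2
  else (ext0 f (s.1 / 2)).2 + s.1 / 2 + 1

private lemma gval_even (f : Fin k → ℕ × ℕ) (s : Fin (2 * k)) (t : ℕ)
    (ht : s.1 = 2 * t) : gval f s = (ext0 f t).1 + t := by
  unfold gval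
  rw [if_pos (by omega), show s.1 / 2 = t by omega]

private lemma gval_odd (f : Fin k → ℕ × ℕ) (s : Fin (2 * k)) (t : ℕ)
    (ht : s.1 = 2 * t + 1) : gval f s = (ext0 f t).2 + t + 1 := by
  unfold gval
  rw [if_neg (by omega), show s.1 / 2 = t by omega]

private lemma gval_lt {f : Fin k → ℕ × ℕ} (hf : Pchain n k f) (s : Fin (2 * k)) :
    gval f s < n + k + 1 := by
  have hs := s.2
  have hP := (pc_of hf).1 (s.1 / 2) (by omega)
  rcases Nat.even_or_odd s.1 with ⟨t, hpar⟩ | ⟨t, hpar⟩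
  · rw [gval_even f s (s.1 / 2) (by omega)]; omega
  · rw [gval_odd f s (s.1 / 2) (by omega)]; omega

private lemma gval_step {f : Fin k → ℕ × ℕ} (hf : Pchain n k f) (s s' : Fin (2 * k))
    (h : s.1 + 1 = s'.1) : gval f s < gval f s' := by
  have hs' := s'.2
  rcases Nat.even_or_odd s.1 with ⟨t, hpar⟩ | ⟨t, hpar⟩
  · rw [gval_even f s t (by omega), gval_odd f s' t (by omega)]
    have := ((pc_of hf).1 t (by omega)).1
    omega
  · rw [gval_odd f s t (by omega), gval_even f s' (t + 1) (by omega)]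
    have := (pc_of hf).2 t (by omega)
    omega

private lemma gval_mono {f : Fin k → ℕ × ℕ} (hf : Pchain n k f) :
    StrictMono (fun s : Fin (2 * k) => (⟨gval f s, gval_lt hf s⟩ : Fin (n + k + 1))) := by
  have key : ∀ (d : ℕ) (a b : Fin (2 * k)), a.1 + 1 + d = b.1 → gval f a < gval f b := by
    intro d
    induction d with
    | zero => intro a b h; exact gval_step hf a b (by omega)
    | succ d ih =>
      intro a b h
      have hb' : a.1 + 1 + d < 2 * k := by omega
      set c : Fin (2 * k) := ⟨a.1 + 1 + d, hb'⟩ with hc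
      have hcv : c.1 = a.1 + 1 + d := rfl
      exact lt_trans (ih a c (by omega)) (gval_step hf c b (by omega))
  intro a b hab
  rw [Fin.lt_def] at hab ⊢
  exact key (b.1 - a.1 - 1) a b (by omega)

private lemma smono_shift {m N : ℕ} {g : Fin m → Fin N} (hg : StrictMono g) :
    ∀ (d : ℕ) (a b : Fin m), a.1 + d = b.1 → (g a).1 + d ≤ (g b).1 := by
  intro d
  induction d with
  | zero =>
    intro a b h
    have : a = b := Fin.eq_of_val_eq (by omega)
    subst this; omega
  | succ d ih =>
    intro a b h
    have hb' : a.1 + d < m := by omega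
    set c : Fin m := ⟨a.1 + d, hb'⟩ with hc
    have hcv : c.1 = a.1 + d := rfl
    have h1 := ih a c (by omega)
    have h2 : g c < g b := hg (by rw [Fin.lt_def]; omega)
    rw [Fin.lt_def] at h2
    omega

private lemma smono_le {m N : ℕ} {g : Fin m → Fin N} (hg : StrictMono g) (s : Fin m) :
    s.1 ≤ (g s).1 := by
  have h0 : 0 < m := s.pos
  set a : Fin m := ⟨0, h0⟩ with ha
  have hav : a.1 = 0 := rfl
  have := smono_shift hg s.1 a s (by omega)
  omega

private lemma smono_ub {m N : ℕ} {g : Fin m → Fin N} (hg : StrictMono g) (s : Fin m) :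
    (g s).1 + m ≤ N + s.1 := by
  have hs := s.2
  have hm : m - 1 < m := by omega
  set b : Fin m := ⟨m - 1, hm⟩ with hb
  have hbv : b.1 = m - 1 := rfl
  have h1 := smono_shift hg (m - 1 - s.1) s b (by omega)
  have h2 := (g b).2
  omega

private def finv (n k : ℕ) (g : Fin (2 * k) → Fin (n + k + 1)) (t : Fin k) : ℕ × ℕ :=
  ((g (e0 t)).1 - t.1, (g (e1 t)).1 - t.1 - 1)

private lemma finv_mem {g : Fin (2 * k) → Fin (n + k + 1)} (hg : StrictMono g) :
    Pchain n k (finv n k g) := by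
  constructor
  · intro t
    have ht := t.2
    have h1 : (g (e0 t)).1 < (g (e1 t)).1 := by
      have : g (e0 t) < g (e1 t) := hg (by rw [Fin.lt_def, e0_val, e1_val]; omega)
      rwa [Fin.lt_def] at this
    have h2 := smono_le hg (e0 t)
    have h3 := smono_le hg (e1 t)
    have h4 := smono_ub hg (e1 t)
    rw [e0_val] at h2
    rw [e1_val] at h3 h4
    show (g (e0 t)).1 - t.1 ≤ (g (e1 t)).1 - t.1 - 1 ∧ (g (e1 t)).1 - t.1 - 1 ≤ n
    omega
  · intro t h
    have h1 : (g (e1 t)).1 < (g (e0 ⟨t.1 + 1, h⟩)).1 := by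
      have : g (e1 t) < g (e0 ⟨t.1 + 1, h⟩) := hg (by
        rw [Fin.lt_def, e0_val, e1_val]
        show 2 * t.1 + 1 < 2 * (t.1 + 1)
        omega)
      rwa [Fin.lt_def] at this
    have h2 := smono_le hg (e1 t)
    rw [e1_val] at h2
    show (g (e1 t)).1 - t.1 - 1 < (g (e0 ⟨t.1 + 1, h⟩)).1 - (t.1 + 1)
    omega

private lemma ncard_chains (n k : ℕ) :
    Set.ncard {f : Fin k → ℕ × ℕ | Pchain n k f} = Nat.choose (n + k + 1) (2 * k) := by
  rw [← Nat.card_coe_set_eq, ← card_strictMonoMaps (2 * k) (n + k + 1)]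
  apply Nat.card_congr
  refine
    { toFun := fun F =>
        ⟨fun s => (⟨gval F.1 s, gval_lt F.2 s⟩ : Fin (n + k + 1)), gval_mono F.2⟩
      invFun := fun G => ⟨finv n k G.1, finv_mem G.2⟩
      left_inv := ?_
      right_inv := ?_ }
  · rintro ⟨f, hf⟩
    apply Subtype.ext
    funext t
    show (gval f (e0 t) - t.1, gval f (e1 t) - t.1 - 1) = f t
    rw [gval_even f (e0 t) t.1 (e0_val t), gval_odd f (e1 t) t.1 (e1_val t), ext0_eq]
    have h1 : (f t).1 + t.1 - t.1 = (f t).1 := by omega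
    have h2 : (f t).2 + t.1 + 1 - t.1 - 1 = (f t).2 := by omega
    rw [h1, h2]
  · rintro ⟨g, hg⟩
    apply Subtype.ext
    funext s
    apply Fin.eq_of_val_eq
    show gval (finv n k g) s = (g s).1
    have hs2 := s.2
    rcases Nat.even_or_odd s.1 with ⟨t, hpar⟩ | ⟨t, hpar⟩
    · have htk : t < k := by omega
      rw [gval_even (finv n k g) s t (by omega)]
      unfold ext0
      rw [dif_pos htk]
      have hv : ((⟨t, htk⟩ : Fin k)).1 = t := rfl
      have hse : e0 (⟨t, htk⟩ : Fin k) = s := Fin.eq_of_val_eq (by rw [e0_val]; omega)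
      show (g (e0 ⟨t, htk⟩)).1 - (⟨t, htk⟩ : Fin k).1 + t = (g s).1
      rw [hse]
      have h2 := smono_le hg s
      omega
    · have htk : t < k := by omega
      rw [gval_odd (finv n k g) s t (by omega)]
      unfold ext0
      rw [dif_pos htk]
      have hv : ((⟨t, htk⟩ : Fin k)).1 = t := rfl
      have hse : e1 (⟨t, htk⟩ : Fin k) = s := Fin.eq_of_val_eq (by rw [e1_val]; omega)
      show (g (e1 ⟨t, htk⟩)).1 - (⟨t, htk⟩ : Fin k).1 - 1 + t + 1 = (g s).1
      rw [hse]
      have h2 := smono_le hg s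
      omega

end chains




private def Ffib (m : ℕ) : ℕ := ∑ r ∈ Finset.range (m + 1), Nat.choose (m - r) r

private lemma Ffib_rec (m : ℕ) : Ffib (m + 2) = Ffib (m + 1) + Ffib m := by
  have h2 : ∑ r ∈ Finset.range (m + 2), Nat.choose (m - r) r = Ffib m := by
    unfold Ffib
    rw [Finset.sum_range_succ]
    have : m - (m + 1) = 0 := by omega
    simp [this, Nat.choose_eq_zero_of_lt]
  have h3 : (∑ r ∈ Finset.range (m + 2), Nat.choose (m - r) (r + 1)) + 1 = Ffib (m + 1) := by
    have key : ∑ r ∈ Finset.range (m + 1), Nat.choose (m + 1 - (r + 1)) (r + 1) =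
        ∑ r ∈ Finset.range (m + 1), Nat.choose (m - r) (r + 1) :=
      Finset.sum_congr rfl fun r hr => by congr 1; omega
    have h0 : Nat.choose (m - (m + 1)) (m + 1 + 1) = 0 := by
      have : m - (m + 1) = 0 := by omega
      rw [this]
      exact Nat.choose_eq_zero_of_lt (by omega)
    rw [Finset.sum_range_succ, h0, ← key]
    unfold Ffib
    conv_rhs => rw [Finset.sum_range_succ']
    have : Nat.choose (m + 1 - 0) 0 = 1 := Nat.choose_zero_right _
    omega
  unfold Ffib
  rw [Finset.sum_range_succ']
  have h1 : ∀ r ∈ Finset.range (m + 2),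
      Nat.choose (m + 2 - (r + 1)) (r + 1) =
        Nat.choose (m - r) (r + 1) + Nat.choose (m - r) r := by
    intro r hr
    rw [Finset.mem_range] at hr
    rcases Nat.lt_or_ge r (m + 1) with h | h
    · have : m + 2 - (r + 1) = (m - r) + 1 := by omega
      rw [this, Nat.choose_succ_succ]
      exact Nat.add_comm _ _
    · have hr' : r = m + 1 := by omega
      subst hr'
      simp [Nat.choose_eq_zero_of_lt]
  rw [Finset.sum_congr rfl h1, Finset.sum_add_distrib, Nat.choose_zero_right]
  show _ = Ffib (m + 1) + Ffib m
  omega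

private lemma Ffib_eq (m : ℕ) : Ffib m = Nat.fib (m + 1) := by
  induction m using Nat.twoStepInduction with
  | zero => simp [Ffib]
  | one => simp [Ffib, Finset.sum_range_succ]
  | more m ih1 ih2 =>
    rw [Ffib_rec, ih1, ih2]
    show Nat.fib (m + 1 + 1) + Nat.fib (m + 1) = Nat.fib (m + 1 + 2)
    conv_rhs => rw [Nat.fib_add_two]
    omega

private lemma sum_choose_eq_fib (n : ℕ) :
    ∑ k ∈ Finset.range (n + 2), Nat.choose (n + k + 1) (2 * k) = Nat.fib (2 * n + 3) := by
  have h1 : ∑ k ∈ Finset.range (n + 2), Nat.choose (n + k + 1) (2 * k) =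
      ∑ r ∈ Finset.range (n + 2), Nat.choose (2 * n + 2 - r) r := by
    rw [← Finset.sum_range_reflect]
    refine Finset.sum_congr rfl fun r hr => ?_
    rw [Finset.mem_range] at hr
    have e1 : n + 2 - 1 - r = n + 1 - r := by omega
    rw [e1]
    have e2 : n + (n + 1 - r) + 1 = 2 * n + 2 - r := by omega
    have e3 : 2 * (n + 1 - r) = (2 * n + 2 - r) - r := by omega
    rw [e2, e3, Nat.choose_symm (by omega)]
  have h4 : ∑ r ∈ Finset.range (n + 2), Nat.choose (2 * n + 2 - r) r = Ffib (2 * n + 2) := by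
    unfold Ffib
    refine Finset.sum_subset (Finset.range_subset_range.2 (by omega)) fun r _ hr => ?_
    rw [Finset.mem_range] at hr
    push_neg at hr
    exact Nat.choose_eq_zero_of_lt (by omega)
  rw [h1, h4, Ffib_eq]

/-- Let `n ≥ 1`.  Then `Σ_{k=0}^{n+1} N_k = fib (2n+3)`, where `N_k` is
the number of `2k`-tuples `(i₁, j₁, …, i_k, j_k)` of natural numbers with
`i₁ ≤ j₁ < i₂ ≤ j₂ < ⋯ < i_k ≤ j_k ≤ n` (so `N₀ = 1`, counting the empty tuple), and
`fib` is the Fibonacci sequence. -/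
theorem statement_15 (n : ℕ) (hn : 1 ≤ n) :
    (∑ k ∈ Finset.range (n + 2),
        Set.ncard {f : Fin k → ℕ × ℕ |
          (∀ t, (f t).1 ≤ (f t).2 ∧ (f t).2 ≤ n) ∧
          ∀ (t : ℕ) (h : t + 1 < k), (f ⟨t, by omega⟩).2 < (f ⟨t + 1, h⟩).1}) =
      Nat.fib (2 * n + 3) := by
  rw [← sum_choose_eq_fib n]
  refine Finset.sum_congr rfl fun k _ => ?_
  rw [← ncard_chains n k]
  congr 1
  ext f
  simp only [Set.mem_setOf_eq]
  constructor
  · rintro ⟨hA, hB⟩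
    exact ⟨hA, fun t h => hB t.1 h⟩
  · rintro ⟨hA, hB⟩
    exact ⟨hA, fun t h => hB ⟨t, by omega⟩ h⟩
end

section
/- Let R be a valuation domain and let C be a nonempty chain of prime ideals of R (totally ordered by inclusion) having no greatest element. Then p = ⋃_{q ∈ C} q is a prime ideal of R and p is idempotent: p·p = p. -/
universe u

/-- Let `R` be a valuation domain and `C` a nonempty chain of prime
ideals of `R` having no greatest element.  Then `p = ⋃_{q ∈ C} q` is a prime ideal of `R`
and `p` is idempotent: `p·p = p`. -/
theorem statement_17 (R : Type u) [CommRing R] [IsDomain R]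
    (hchain : ∀ I J : Ideal R, I ≤ J ∨ J ≤ I)
    (C : Set (Ideal R)) (hne : C.Nonempty) (hprime : ∀ q ∈ C, q.IsPrime)
    (hnomax : ∀ q ∈ C, ∃ q' ∈ C, q < q') :
    ∃ p : Ideal R, (∀ x : R, x ∈ p ↔ ∃ q ∈ C, x ∈ q) ∧ p.IsPrime ∧ p * p = p := by
  have hdir : DirectedOn (· ≤ ·) C := fun I hI J hJ => by
    rcases hchain I J with h | h
    · exact ⟨J, hJ, h, le_refl J⟩
    · exact ⟨I, hI, le_refl I, h⟩
  set p : Ideal R := sSup C with hp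
  have hmem : ∀ x : R, x ∈ p ↔ ∃ q ∈ C, x ∈ q := fun x =>
    Submodule.mem_sSup_of_directed hne hdir
  have hle : ∀ q ∈ C, q ≤ p := fun q hq => le_sSup hq
  have hPrime : p.IsPrime := by
    constructor
    · intro h
      have : (1 : R) ∈ p := h ▸ Submodule.mem_top
      obtain ⟨q, hq, h1⟩ := (hmem 1).mp this
      exact (hprime q hq).ne_top ((Ideal.eq_top_iff_one q).mpr h1)
    · intro x y hxy
      obtain ⟨q, hq, hxyq⟩ := (hmem (x * y)).mp hxy
      rcases (hprime q hq).mem_or_mem hxyq with h | h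
      · exact Or.inl (hle q hq h)
      · exact Or.inr (hle q hq h)
  refine ⟨p, hmem, hPrime, le_antisymm (Ideal.mul_le_right) ?_⟩
  intro x hx
  obtain ⟨q, hq, hxq⟩ := (hmem x).mp hx
  obtain ⟨q', hq', hlt⟩ := hnomax q hq
  obtain ⟨t, htq', htq⟩ := Set.exists_of_ssubset hlt
  -- compare (x) and (t)
  rcases hchain (Ideal.span {x}) (Ideal.span {t}) with h | h
  · -- x = t * s
    have hx_mem : x ∈ Ideal.span ({t} : Set R) :=
      h (Ideal.subset_span (Set.mem_singleton x))
    obtain ⟨s, hs⟩ := Ideal.mem_span_singleton'.mp hx_mem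
    -- s * t = x ∈ q, t ∉ q, so s ∈ q
    have hsq : s ∈ q := by
      rcases (hprime q hq).mem_or_mem (hs ▸ hxq) with h' | h'
      · exact h'
      · exact absurd h' htq
    have : x = t * s := by rw [mul_comm] at hs; exact hs.symm
    rw [this]
    exact Ideal.mul_mem_mul (hle q' hq' htq') (hle q hq hsq)
  · -- t ∈ (x) ⊆ q, contradiction
    exfalso
    have ht_mem : t ∈ Ideal.span ({x} : Set R) :=
      h (Ideal.subset_span (Set.mem_singleton t))
    obtain ⟨s, hs⟩ := Ideal.mem_span_singleton'.mp ht_mem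
    exact htq (hs ▸ Ideal.mul_mem_left q s hxq)
end
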